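/- (Sharpness / instability for the Lasso.) Let Φ : ℝ^N → ℝ^P with columns φ₁,…,φ_N, and x₀ ∈ ℝ^N with I = supp(x₀). Assume x₀ is the unique minimizer of ‖·‖₁ over {x : Φx = Φx₀}, that (φ_i)_{i∈I} is linearly independent, and that ‖Φ_{I^c}^⊤ Φ_I (Φ_I^⊤Φ_I)^{-1} sign(x₀)_I‖_∞ > 1. Then there exists C > 0 such that for every λ and w with 0 < λ ≤ C and ‖w‖ ≤ Cλ, setting y = Φx₀ + w, every minimizer x⋆ of min_x (1/(2λ))‖Φx − y‖² + ‖x‖₁ satisfies supp(x⋆) ⊄ supp(x₀). -/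

import Mathlib

open Matrix

/-- Euclidean dot product on `ℝ^n`. -/
noncomputable def dotp {n : ℕ} (u v : Fin n → ℝ) : ℝ := ∑ i, u i * v i

/-- Euclidean (ℓ²) norm on `ℝ^n`. -/
noncomputable def nrm2 {n : ℕ} (u : Fin n → ℝ) : ℝ := Real.sqrt (∑ i, (u i) ^ 2)

/-- ℓ¹ norm on `ℝ^n`. -/
noncomputable def l1norm {n : ℕ} (u : Fin n → ℝ) : ℝ := ∑ i, |u i|

/-- ℓ^∞ norm of a finitely indexed real vector. -/
noncomputable def linf {ι : Type*} [Fintype ι] (u : ι → ℝ) : ℝ := ⨆ i, |u i|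

/-- The sign function: 1 for positive, -1 for negative, 0 at 0. -/
noncomputable def sgn (t : ℝ) : ℝ := if 0 < t then 1 else if t < 0 then -1 else 0

/-- Subdifferential of a finite-valued function `J : ℝ^n → ℝ` at `x`:
`∂J(x) = {η : J(x+δ) ≥ J(x) + ⟨η,δ⟩ for all δ}`. -/
def subdiff {n : ℕ} (J : (Fin n → ℝ) → ℝ) (x : Fin n → ℝ) : Set (Fin n → ℝ) :=
  {η | ∀ δ, J x + dotp η δ ≤ J (x + δ)}

/-- The model tangent subspace `T_x = Lin(∂J(x))^⊥`, where `Lin(E)` is the linear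
space parallel to the affine hull of `E`. -/
def modelT {n : ℕ} (J : (Fin n → ℝ) → ℝ) (x : Fin n → ℝ) : Set (Fin n → ℝ) :=
  {u | ∀ v ∈ (affineSpan ℝ (subdiff J x)).direction, dotp u v = 0}

/-- Support of `x` as a finite set of indices. -/
noncomputable def suppF {n : ℕ} (x : Fin n → ℝ) : Finset (Fin n) :=
  Finset.univ.filter fun i => x i ≠ 0

/-- The submatrix `Φ_I` of columns of `Φ` indexed by `I`. -/
noncomputable def colsub {N P : ℕ} (Φ : Matrix (Fin P) (Fin N) ℝ) (I : Finset (Fin N)) :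
    Matrix (Fin P) ↥I ℝ := Φ.submatrix id (↑)

/-- The vector `p_F = Φ_I (Φ_I^⊤ Φ_I)⁻¹ s` for a sign vector `s` on `I`. -/
noncomputable def pFvec {N P : ℕ} (Φ : Matrix (Fin P) (Fin N) ℝ) (I : Finset (Fin N))
    (s : ↥I → ℝ) : Fin P → ℝ :=
  (colsub Φ I).mulVec ((((colsub Φ I)ᵀ * (colsub Φ I))⁻¹).mulVec s)

/-- The irrepresentable-condition quantity `‖Φ_{I^c}^⊤ Φ_I (Φ_I^⊤Φ_I)⁻¹ s‖_∞`. -/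
noncomputable def ICval {N P : ℕ} (Φ : Matrix (Fin P) (Fin N) ℝ) (I : Finset (Fin N))
    (s : ↥I → ℝ) : ℝ :=
  linf ((Φ.submatrix id ((↑) : {j // j ∉ I} → Fin N))ᵀ.mulVec (pFvec Φ I s))


section basics
variable {n : ℕ}

lemma dotp_eq (u v : Fin n → ℝ) : dotp u v = u ⬝ᵥ v := rfl

lemma nrm2_nonneg (u : Fin n → ℝ) : 0 ≤ nrm2 u := Real.sqrt_nonneg _

lemma l1norm_nonneg (u : Fin n → ℝ) : 0 ≤ l1norm u :=
  Finset.sum_nonneg fun i _ => abs_nonneg _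

lemma nrm2_sq (u : Fin n → ℝ) : nrm2 u ^ 2 = ∑ i, u i ^ 2 :=
  Real.sq_sqrt (Finset.sum_nonneg fun i _ => sq_nonneg _)

lemma dotp_le (u v : Fin n → ℝ) : dotp u v ≤ nrm2 u * nrm2 v :=
  Real.sum_mul_le_sqrt_mul_sqrt _ u v

lemma nrm2_neg (u : Fin n → ℝ) : nrm2 (-u) = nrm2 u := by
  unfold nrm2; congr 1; exact Finset.sum_congr rfl fun i _ => by simp

lemma dotp_neg_left (u v : Fin n → ℝ) : dotp (-u) v = -dotp u v := by
  unfold dotp; rw [← Finset.sum_neg_distrib]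
  exact Finset.sum_congr rfl fun i _ => by simp [neg_mul]

lemma abs_dotp_le (u v : Fin n → ℝ) : |dotp u v| ≤ nrm2 u * nrm2 v := by
  rw [abs_le]; constructor
  · have h := dotp_le (-u) v
    rw [dotp_neg_left, nrm2_neg] at h; linarith
  · exact dotp_le u v

lemma nrm2_sq_add_smul (u v : Fin n → ℝ) (c : ℝ) :
    nrm2 (u + c • v) ^ 2 = nrm2 u ^ 2 + 2 * c * dotp u v + c ^ 2 * nrm2 v ^ 2 := by
  simp only [nrm2_sq, dotp, Pi.add_apply, Pi.smul_apply, smul_eq_mul, Finset.mul_sum]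
  rw [← Finset.sum_add_distrib, ← Finset.sum_add_distrib]
  exact Finset.sum_congr rfl fun i _ => by ring

lemma nrm2_add_le (u v : Fin n → ℝ) : nrm2 (u + v) ≤ nrm2 u + nrm2 v := by
  have h1 : nrm2 (u + v) ^ 2 ≤ (nrm2 u + nrm2 v) ^ 2 := by
    have := nrm2_sq_add_smul u v 1
    simp only [one_smul, one_pow, mul_one] at this
    nlinarith [dotp_le u v, nrm2_nonneg u, nrm2_nonneg v]
  nlinarith [nrm2_nonneg (u + v), nrm2_nonneg u, nrm2_nonneg v]

lemma nrm2_eq_zero {u : Fin n → ℝ} (h : nrm2 u = 0) : u = 0 := by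
  have h2 : (∑ i, u i ^ 2) = 0 := by
    have := nrm2_sq u; rw [h] at this; simpa using this.symm
  funext i
  have := (Finset.sum_eq_zero_iff_of_nonneg (fun i _ => sq_nonneg (u i))).1 h2 i (Finset.mem_univ i)
  exact pow_eq_zero_iff (by norm_num) |>.1 this

lemma nrm2_le_sqrt {u : Fin n → ℝ} {X : ℝ} (h : nrm2 u ^ 2 ≤ X) : nrm2 u ≤ Real.sqrt X := by
  have hX : 0 ≤ X := le_trans (sq_nonneg _) h
  exact (Real.le_sqrt (nrm2_nonneg u) hX).2 h

lemma l1_single (x : Fin n → ℝ) (k : Fin n) (c : ℝ) :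
    l1norm (x + Pi.single k c) + |x k| = l1norm x + |x k + c| := by
  set z : Fin n → ℝ := x + Pi.single k c with hz
  unfold l1norm
  have h1 := Finset.sum_erase_add Finset.univ (fun i => |z i|) (Finset.mem_univ k)
  have h2 := Finset.sum_erase_add Finset.univ (fun i => |x i|) (Finset.mem_univ k)
  have he : ∑ i ∈ Finset.univ.erase k, |z i| = ∑ i ∈ Finset.univ.erase k, |x i| := by
    refine Finset.sum_congr rfl fun i hi => ?_
    have hik : i ≠ k := Finset.ne_of_mem_erase hi
    simp [hz, Pi.single_apply, hik]
  have hk : |z k| = |x k + c| := by simp [hz, Pi.single_apply]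
  rw [he, hk] at h1
  linarith

end basics

section optcond
variable {N P : ℕ}

lemma le_of_eps {a b : ℝ} (h : ∀ ε > 0, a ≤ b + ε) : a ≤ b := by
  by_contra hc; push_neg at hc
  have := h ((a - b)/2) (by linarith); linarith

lemma abs_step {a t σ : ℝ} (ha : a ≠ 0) (hσ : σ = 1 ∨ σ = -1) (ht : 0 < t) (hta : t < |a|) :
    |a + σ * t| - |a| = σ * t * sgn a := by
  rcases ha.lt_or_gt with h1 | h1
  · rw [abs_of_neg h1] at hta ⊢
    have hs : sgn a = -1 := by unfold sgn; rw [if_neg (by linarith), if_pos h1]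
    rcases hσ with h2 | h2 <;> subst h2
    · rw [abs_of_neg (by linarith : a + 1 * t < 0)]; rw [hs]; ring
    · rw [abs_of_neg (by nlinarith : a + (-1) * t < 0)]; rw [hs]; ring
  · rw [abs_of_pos h1] at hta ⊢
    have hs : sgn a = 1 := by unfold sgn; rw [if_pos h1]
    rcases hσ with h2 | h2 <;> subst h2
    · rw [abs_of_pos (by linarith : 0 < a + 1 * t)]; rw [hs]; ring
    · rw [abs_of_pos (by nlinarith : 0 < a + (-1) * t)]; rw [hs]; ring

lemma opt_cond (Φ : Matrix (Fin P) (Fin N) ℝ) (y : Fin P → ℝ) {lam : ℝ} (hlam : 0 < lam)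
    (xs : Fin N → ℝ)
    (hmin : ∀ x, (1/(2*lam)) * nrm2 (Φ.mulVec xs - y) ^ 2 + l1norm xs ≤
                 (1/(2*lam)) * nrm2 (Φ.mulVec x - y) ^ 2 + l1norm x)
    (k : Fin N) :
    (xs k = 0 → |dotp (y - Φ.mulVec xs) (fun p => Φ p k)| ≤ lam) ∧
    (xs k ≠ 0 → dotp (y - Φ.mulVec xs) (fun p => Φ p k) = lam * sgn (xs k)) := by
  set col : Fin P → ℝ := fun p => Φ p k with hcol
  set d : ℝ := dotp (y - Φ.mulVec xs) col with hd
  set n2 : ℝ := nrm2 col ^ 2 with hn2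
  have hn2nn : 0 ≤ n2 := sq_nonneg _
  have base : ∀ c : ℝ, 0 ≤ -(2*c*d) + c^2*n2 + 2*lam*(|xs k + c| - |xs k|) := by
    intro c
    have h := hmin (xs + Pi.single k c)
    have hmv : Φ.mulVec (xs + Pi.single k c) - y = (Φ.mulVec xs - y) + c • col := by
      rw [Matrix.mulVec_add, Matrix.mulVec_single]
      funext p
      simp only [Pi.add_apply, Pi.sub_apply, Pi.smul_apply, smul_eq_mul, hcol]
      simp [Matrix.col_apply]
      ring
    rw [hmv, nrm2_sq_add_smul] at h
    have hneg : dotp (Φ.mulVec xs - y) col = -d := by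
      rw [hd, ← dotp_neg_left, neg_sub]
    rw [hneg] at h
    have hl1 : l1norm (xs + Pi.single k c) = l1norm xs + |xs k + c| - |xs k| := by
      have := l1_single xs k c; linarith
    rw [hl1] at h
    set B := nrm2 (Φ.mulVec xs - y) ^ 2
    have h2 := mul_le_mul_of_nonneg_left h (by positivity : (0:ℝ) ≤ 2*lam)
    have hlam' : lam ≠ 0 := ne_of_gt hlam
    have e1 : 2*lam*((1/(2*lam)) * B + l1norm xs) = B + 2*lam*l1norm xs := by
      field_simp
    have e2 : 2*lam*((1/(2*lam)) * (B + 2*c*(-d) + c^2*n2) +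
        (l1norm xs + |xs k + c| - |xs k|)) =
        B - 2*c*d + c^2*n2 + 2*lam*(l1norm xs + |xs k + c| - |xs k|) := by
      field_simp; ring
    rw [e1, e2] at h2
    linarith
  constructor
  · intro h0
    rw [abs_le]; constructor
    · -- -lam ≤ d
      have : -d ≤ lam := by
        apply le_of_eps; intro ε hε
        set t : ℝ := 2*ε/(n2+1) with htdef
        have ht : 0 < t := by positivity
        have hb := base (-t)
        rw [h0] at hb
        rw [zero_add, abs_neg, abs_of_pos ht, abs_zero] at hb
        have htn : t*n2 ≤ 2*ε := by
          have hne0 : (n2:ℝ)+1 ≠ 0 := by positivity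
          have : t*(n2+1) = 2*ε := by rw [htdef]; field_simp
          nlinarith
        nlinarith
      linarith
    · apply le_of_eps; intro ε hε
      set t : ℝ := 2*ε/(n2+1) with htdef
      have ht : 0 < t := by positivity
      have hb := base t
      rw [h0] at hb
      rw [zero_add, abs_of_pos ht, abs_zero] at hb
      have htn : t*n2 ≤ 2*ε := by
        have hne0 : (n2:ℝ)+1 ≠ 0 := by positivity
        have : t*(n2+1) = 2*ε := by rw [htdef]; field_simp
        nlinarith
      nlinarith
  · intro hne
    have hapos : 0 < |xs k| := abs_pos.2 hne
    have key : ∀ σ : ℝ, σ = 1 ∨ σ = -1 → σ * (d - lam * sgn (xs k)) ≤ 0 := by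
      intro σ hσ
      have hσsq : σ^2 = 1 := by rcases hσ with h | h <;> subst h <;> norm_num
      have hσabs : |σ| = 1 := by rcases hσ with h | h <;> subst h <;> norm_num
      have h0 : (0:ℝ) ≤ 0 := le_refl 0
      apply le_of_eps; intro ε hε
      set t : ℝ := min (2*ε/(n2+1)) (|xs k|/2) with htdef
      have ht : 0 < t := lt_min (by positivity) (by linarith)
      have hta : t < |xs k| := lt_of_le_of_lt (min_le_right _ _) (by linarith)
      have hb := base (σ*t)
      rw [abs_step hne hσ ht hta] at hb
      have htn : t*n2 ≤ 2*ε := by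
        have h1 : t ≤ 2*ε/(n2+1) := min_le_left _ _
        have h2 : t*(n2+1) ≤ 2*ε := by
          rw [div_eq_mul_inv] at h1
          have := mul_le_mul_of_nonneg_right h1 (by positivity : (0:ℝ) ≤ n2+1)
          rw [mul_assoc, inv_mul_cancel₀ (by positivity : (n2:ℝ)+1 ≠ 0), mul_one] at this
          exact this
        nlinarith
      have hst : (σ*t)^2 = t^2 := by rw [mul_pow, hσsq, one_mul]
      rw [hst] at hb
      nlinarith [mul_le_mul_of_nonneg_left htn ht.le, mul_pos ht hε, sq_nonneg t]
    have k1 := key 1 (Or.inl rfl)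
    have k2 := key (-1) (Or.inr rfl)
    linarith

end optcond

section gram
variable {N P : ℕ}

lemma gram_unit (Φ : Matrix (Fin P) (Fin N) ℝ) (I : Finset (Fin N))
    (hli : LinearIndependent ℝ (fun i : ↥I => Φᵀ (i : Fin N))) :
    IsUnit ((colsub Φ I)ᵀ * colsub Φ I) := by
  set A := colsub Φ I with hA
  rw [← Matrix.mulVec_injective_iff_isUnit]
  intro v₁ v₂ hv
  have hker : ∀ v : ↥I → ℝ, (Aᵀ * A).mulVec v = 0 → v = 0 := by
    intro v hv0
    have hAv : A.mulVec v = 0 := by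
      have h1 : v ⬝ᵥ (Aᵀ * A).mulVec v = 0 := by rw [hv0]; simp
      have h2 : v ⬝ᵥ (Aᵀ * A).mulVec v = (A.mulVec v) ⬝ᵥ (A.mulVec v) := by
        rw [← Matrix.mulVec_mulVec, Matrix.dotProduct_mulVec, Matrix.vecMul_transpose]
      rw [h2] at h1
      funext p
      have hnn : ∀ q ∈ Finset.univ, 0 ≤ (A.mulVec v) q * (A.mulVec v) q :=
        fun q _ => mul_self_nonneg _
      have := (Finset.sum_eq_zero_iff_of_nonneg hnn).1 h1 p (Finset.mem_univ p)
      simpa using mul_self_eq_zero.1 this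
    have hsum : ∑ i : ↥I, v i • (fun p => Φ p (i : Fin N)) = 0 := by
      funext p
      rw [← hAv]
      simp only [Matrix.mulVec, dotProduct, hA, colsub, Matrix.submatrix_apply, id]
      rw [Finset.sum_apply]
      exact Finset.sum_congr rfl fun i _ => by simp [mul_comm]
    have := Fintype.linearIndependent_iff.1 hli v ?_
    · funext i; exact this i
    · convert hsum using 2
      rfl
  have h0 : (Aᵀ * A).mulVec (v₁ - v₂) = 0 := by
    rw [Matrix.mulVec_sub, hv, sub_self]
  have := hker _ h0
  exact sub_eq_zero.1 this

lemma mulVec_support_subset (Φ : Matrix (Fin P) (Fin N) ℝ) (I : Finset (Fin N))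
    (v : Fin N → ℝ) (hv : ∀ j, j ∉ I → v j = 0) :
    Φ.mulVec v = (colsub Φ I).mulVec (fun i : ↥I => v i) := by
  funext p
  simp only [Matrix.mulVec, dotProduct, colsub, Matrix.submatrix_apply, id]
  rw [show (∑ i : ↥I, Φ p (i:Fin N) * v (i:Fin N)) = ∑ j ∈ I, Φ p j * v j from Finset.sum_coe_sort I (fun j => Φ p j * v j)]
  exact (Finset.sum_subset I.subset_univ (fun j _ hj => by rw [hv j hj, mul_zero])).symm

lemma linf_zero_of_isEmpty {ι : Type*} [Fintype ι] [IsEmpty ι] (u : ι → ℝ) : linf u = 0 :=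
  Real.iSup_of_isEmpty _

lemma linf_le_max {ι : Type*} [Fintype ι] [Nonempty ι] (u : ι → ℝ) :
    ∃ j, linf u ≤ |u j| := by
  obtain ⟨j, hj⟩ := Finite.exists_max (fun i => |u i|)
  exact ⟨j, ciSup_le hj⟩

end gram

section compactstep
variable {N P : ℕ}

lemma continuous_l1norm : Continuous (l1norm : (Fin N → ℝ) → ℝ) :=
  continuous_finset_sum _ fun i _ => (continuous_apply i).abs

lemma continuous_nrm2 : Continuous (nrm2 : (Fin P → ℝ) → ℝ) :=
  Real.continuous_sqrt.comp (continuous_finset_sum _ fun i _ => (continuous_apply i).pow 2)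

lemma continuous_mulVec (Φ : Matrix (Fin P) (Fin N) ℝ) :
    Continuous (fun x : Fin N → ℝ => Φ.mulVec x) := by
  apply continuous_pi
  intro p
  simp only [Matrix.mulVec, dotProduct]
  exact continuous_finset_sum _ fun i _ => continuous_const.mul (continuous_apply i)

lemma compact_step (Φ : Matrix (Fin P) (Fin N) ℝ) (x₀ : Fin N → ℝ)
    (huniq : ∀ x, Φ.mulVec x = Φ.mulVec x₀ → x ≠ x₀ → l1norm x₀ < l1norm x)
    (ε : ℝ) (hε : 0 < ε) :
    ∃ μ > 0, ∀ x : Fin N → ℝ, l1norm x ≤ l1norm x₀ + 1 →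
      nrm2 (Φ.mulVec x - Φ.mulVec x₀) + max (l1norm x - l1norm x₀) 0 < μ →
      dist x x₀ < ε := by
  set g : (Fin N → ℝ) → ℝ :=
    fun x => nrm2 (Φ.mulVec x - Φ.mulVec x₀) + max (l1norm x - l1norm x₀) 0 with hg
  have hgc : Continuous g := by
    apply Continuous.add
    · exact continuous_nrm2.comp ((continuous_mulVec Φ).sub continuous_const)
    · exact (continuous_l1norm.sub continuous_const).max continuous_const
  have hgnn : ∀ x, 0 ≤ g x := fun x => add_nonneg (nrm2_nonneg _) (le_max_right _ _)
  have hgpos : ∀ x, ε ≤ dist x x₀ → 0 < g x := by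
    intro x hx
    rcases lt_or_eq_of_le (hgnn x) with h | h
    · exact h
    exfalso
    simp only [hg] at h
    have hn := nrm2_nonneg (Φ.mulVec x - Φ.mulVec x₀)
    have hm := le_max_right (l1norm x - l1norm x₀) (0:ℝ)
    have h1 : nrm2 (Φ.mulVec x - Φ.mulVec x₀) = 0 := by linarith
    have h2 : max (l1norm x - l1norm x₀) 0 = 0 := by linarith
    have hxeq : Φ.mulVec x = Φ.mulVec x₀ := by
      have := nrm2_eq_zero h1; exact sub_eq_zero.1 this
    have hxne : x ≠ x₀ := by
      intro he; rw [he, dist_self] at hx; linarith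
    have := huniq x hxeq hxne
    have hle : l1norm x - l1norm x₀ ≤ 0 := by
      by_contra hc; push_neg at hc
      rw [max_eq_left hc.le] at h2; linarith
    linarith
  set K : Set (Fin N → ℝ) := {x | ε ≤ dist x x₀ ∧ l1norm x ≤ l1norm x₀ + 1} with hK
  rcases Set.eq_empty_or_nonempty K with hKe | hKne
  · refine ⟨1, one_pos, fun x hx1 hx2 => ?_⟩
    by_contra hc; push_neg at hc
    have : x ∈ K := ⟨hc, hx1⟩
    rw [hKe] at this; exact this
  · have hKclosed : IsClosed K := by
      have h1 : IsClosed {x : Fin N → ℝ | ε ≤ dist x x₀} :=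
        isClosed_le continuous_const (continuous_id.dist continuous_const)
      have h2 : IsClosed {x : Fin N → ℝ | l1norm x ≤ l1norm x₀ + 1} :=
        isClosed_le continuous_l1norm continuous_const
      exact h1.inter h2
    have hKbdd : Bornology.IsBounded K := by
      apply (Metric.isBounded_closedBall (x := (0 : Fin N → ℝ)) (r := l1norm x₀ + 1)).subset
      intro x hx
      rw [Metric.mem_closedBall, dist_zero_right]
      have : ∀ i, ‖x i‖ ≤ l1norm x₀ + 1 := by
        intro i
        have h1 : |x i| ≤ l1norm x :=
          Finset.single_le_sum (fun j _ => abs_nonneg (x j)) (Finset.mem_univ i)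
        calc ‖x i‖ = |x i| := rfl
        _ ≤ l1norm x := h1
        _ ≤ l1norm x₀ + 1 := hx.2
      exact (pi_norm_le_iff_of_nonneg (by linarith [l1norm_nonneg x₀])).2 this
    have hKcomp : IsCompact K := Metric.isCompact_of_isClosed_isBounded hKclosed hKbdd
    obtain ⟨z, hzK, hzmin⟩ := hKcomp.exists_isMinOn hKne hgc.continuousOn
    refine ⟨g z, hgpos z hzK.1, fun x hx1 hx2 => ?_⟩
    by_contra hc; push_neg at hc
    have hxK : x ∈ K := ⟨hc, hx1⟩
    have hle : g z ≤ g x := (isMinOn_iff.1 hzmin) x hxK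
    exact absurd hx2 (not_lt.2 hle)
end compactstep

section mainaux

lemma dotp_add_left {n : ℕ} (u v w : Fin n → ℝ) :
    dotp (u + v) w = dotp u w + dotp v w := by
  unfold dotp; rw [← Finset.sum_add_distrib]
  exact Finset.sum_congr rfl fun i _ => by simp [add_mul]

lemma dotp_comm {n : ℕ} (u v : Fin n → ℝ) : dotp u v = dotp v u :=
  Finset.sum_congr rfl fun i _ => mul_comm _ _

lemma linf_zero {ι : Type*} [Fintype ι] : linf (fun _ : ι => (0:ℝ)) = 0 := by
  unfold linf
  rcases isEmpty_or_nonempty ι with h | h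
  · exact Real.iSup_of_isEmpty _
  · simp

lemma sgn_stable {a b : ℝ} (hb : b ≠ 0) (h : |a - b| < |b|) : a ≠ 0 ∧ sgn a = sgn b := by
  rcases hb.lt_or_gt with h1 | h1
  · rw [abs_of_neg h1] at h
    have h2 := abs_lt.1 h
    have ha : a < 0 := by linarith [h2.2]
    refine ⟨ha.ne, ?_⟩
    unfold sgn
    rw [if_neg (by linarith), if_pos ha, if_neg (by linarith), if_pos h1]
  · rw [abs_of_pos h1] at h
    have h2 := abs_lt.1 h
    have ha : 0 < a := by linarith [h2.1]
    refine ⟨ha.ne', ?_⟩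
    unfold sgn
    rw [if_pos ha, if_pos h1]

end mainaux


/-- sharpness/instability for the Lasso. If `x₀` is the unique ℓ¹
minimizer on `{x : Φx = Φx₀}`, `Φ_I` is injective and the irrepresentable
quantity exceeds 1, then for `0 < λ ≤ C` and `‖w‖ ≤ Cλ` every Lasso minimizer
`x⋆` satisfies `supp(x⋆) ⊄ supp(x₀)`. -/
theorem stmt13 {N P : ℕ} (Φ : Matrix (Fin P) (Fin N) ℝ) (x₀ : Fin N → ℝ)
    (huniq : ∀ x, Φ.mulVec x = Φ.mulVec x₀ → x ≠ x₀ → l1norm x₀ < l1norm x)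
    (hli : LinearIndependent ℝ (fun i : ↥(suppF x₀) => Φᵀ (i : Fin N)))
    (hIC : 1 < ICval Φ (suppF x₀) (fun i => sgn (x₀ i))) :
    ∃ C > (0:ℝ), ∀ (lam : ℝ) (w : Fin P → ℝ),
      0 < lam → lam ≤ C → nrm2 w ≤ C * lam →
      ∀ xs : Fin N → ℝ,
        (∀ x, (1 / (2 * lam)) * nrm2 (Φ.mulVec xs - (Φ.mulVec x₀ + w)) ^ 2 + l1norm xs ≤
              (1 / (2 * lam)) * nrm2 (Φ.mulVec x - (Φ.mulVec x₀ + w)) ^ 2 + l1norm x) →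
        ¬ (∀ i, xs i ≠ 0 → x₀ i ≠ 0) := by
  classical
  set I := suppF x₀ with hI
  set s : ↥I → ℝ := fun i => sgn (x₀ (i : Fin N)) with hs
  set A := colsub Φ I with hA
  set G := Aᵀ * A with hG
  have hGu : IsUnit G := gram_unit Φ I hli
  have hGdet : IsUnit G.det := (Matrix.isUnit_iff_isUnit_det G).1 hGu
  have hGinv : G⁻¹ * G = 1 := Matrix.nonsing_inv_mul G hGdet
  set IC := ICval Φ I s with hICdef
  -- I is nonempty
  have hIne : I.Nonempty := by
    rw [Finset.nonempty_iff_ne_empty]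
    intro he
    haveI hiso : IsEmpty ↥I := by rw [he]; infer_instance
    have hp0 : pFvec Φ I s = 0 := by
      funext p
      simp [pFvec, Matrix.mulVec, dotProduct, Finset.univ_eq_empty]
    have : IC = 0 := by
      rw [hICdef]; unfold ICval
      rw [hp0, Matrix.mulVec_zero]
      exact linf_zero
    rw [this] at hIC; linarith
  -- epsilon
  set ε0 := I.inf' hIne (fun i => |x₀ i|) with hε0
  have hε0pos : 0 < ε0 := by
    rw [hε0, Finset.lt_inf'_iff]
    intro i hi
    have hne : x₀ i ≠ 0 := by simpa [hI, suppF] using hi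
    exact abs_pos.2 hne
  have hε0le : ∀ i ∈ I, ε0 ≤ |x₀ i| := fun i hi => Finset.inf'_le _ hi
  set ε := ε0/2 with hε
  have hεpos : 0 < ε := by rw [hε]; linarith
  obtain ⟨μ, hμpos, hμ⟩ := compact_step Φ x₀ huniq ε hεpos
  set L := l1norm x₀ with hL
  have hLnn : 0 ≤ L := l1norm_nonneg x₀
  set D : ℝ := Real.sqrt (1 + 2*L) + 2 with hD
  have hDpos : 0 < D := by have := Real.sqrt_nonneg (1 + 2*L); rw [hD]; linarith
  set c₁ : ℝ := min 1 (μ^2/(2*D^2)) with hc₁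
  have hc₁pos : 0 < c₁ := lt_min one_pos (by positivity)
  set b : Fin N → (Fin P → ℝ) :=
    fun j => A.mulVec ((G⁻¹)ᵀ.mulVec (Aᵀ.mulVec (fun p => Φ p j))) with hb
  set Kc : ℝ := 1 + ∑ j, (nrm2 (fun p => Φ p j) + nrm2 (b j)) with hKc
  have hKcpos : 0 < Kc := by
    rw [hKc]
    have : 0 ≤ ∑ j, (nrm2 (fun p => Φ p j) + nrm2 (b j)) :=
      Finset.sum_nonneg fun j _ => add_nonneg (nrm2_nonneg _) (nrm2_nonneg _)
    linarith
  have hKcge : ∀ j : Fin N, nrm2 (fun p => Φ p j) + nrm2 (b j) ≤ Kc := by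
    intro j
    have h1 := Finset.single_le_sum
      (f := fun j => nrm2 (fun p => Φ p j) + nrm2 (b j))
      (fun j _ => add_nonneg (nrm2_nonneg _) (nrm2_nonneg _)) (Finset.mem_univ j)
    rw [hKc]; linarith
  set C : ℝ := min c₁ ((IC - 1)/(2*Kc)) with hCdef
  have hCpos : 0 < C := lt_min hc₁pos (div_pos (by linarith) (by linarith))
  have hCc₁ : C ≤ c₁ := min_le_left _ _
  have hC1 : C ≤ 1 := le_trans hCc₁ (min_le_left _ _)
  have hCmu : C ≤ μ^2/(2*D^2) := le_trans hCc₁ (min_le_right _ _)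
  have hCK : C ≤ (IC - 1)/(2*Kc) := min_le_right _ _
  clear_value IC ε0 ε L D c₁ Kc C
  refine ⟨C, hCpos, ?_⟩
  intro lam w hlam hlamC hw xs hmin hsupp
  have hlne : lam ≠ 0 := ne_of_gt hlam
  set y : Fin P → ℝ := Φ.mulVec x₀ + w with hy
  set r : Fin P → ℝ := y - Φ.mulVec xs with hr
  -- Step 1: basic bounds from minimality at x₀
  have hminx0 := hmin x₀
  have hyx0 : Φ.mulVec x₀ - y = -w := by rw [hy]; ring
  rw [hyx0, nrm2_neg] at hminx0
  set Aq : ℝ := nrm2 (Φ.mulVec xs - y) ^ 2 with hAqdef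
  have hAq0 : 0 ≤ Aq := sq_nonneg _
  have hw2 : nrm2 w ^ 2 ≤ C^2*lam^2 := by
    have h1 := pow_le_pow_left₀ (nrm2_nonneg w) hw 2
    calc nrm2 w ^ 2 ≤ (C*lam)^2 := h1
    _ = C^2*lam^2 := by ring
  have hmul := mul_le_mul_of_nonneg_left hminx0 (by positivity : (0:ℝ) ≤ 2*lam)
  have e1 : 2*lam*((1/(2*lam)) * Aq + l1norm xs) = Aq + 2*lam*l1norm xs := by
    field_simp
  have e2 : 2*lam*((1/(2*lam)) * nrm2 w ^ 2 + l1norm x₀) = nrm2 w ^ 2 + 2*lam*L := by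
    rw [hL]; field_simp
  rw [e1, e2] at hmul
  -- hmul : Aq + 2*lam*l1norm xs ≤ nrm2 w ^ 2 + 2*lam*L
  have hl1xs : l1norm xs ≤ L + C^2*lam/2 := by
    have h5 : 2*lam*l1norm xs ≤ C^2*lam^2 + 2*lam*L := by linarith
    have e : C^2*lam^2 + 2*lam*L = 2*lam*(L + C^2*lam/2) := by ring
    rw [e] at h5
    exact (mul_le_mul_iff_right₀ (by positivity : (0:ℝ) < 2*lam)).1 h5
  have hAqle : Aq ≤ C^2*lam^2 + 2*lam*L := by
    have : 0 ≤ 2*lam*l1norm xs := mul_nonneg (by positivity) (l1norm_nonneg xs)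
    linarith
  -- Step 2: closeness to x₀
  have hC3 : C^3 ≤ 1 := pow_le_one₀ hCpos.le hC1
  have hC2lam : C^2*lam ≤ C^3 := by
    have h := mul_le_mul_of_nonneg_left hlamC (sq_nonneg C)
    calc C^2*lam ≤ C^2*C := h
    _ = C^3 := by ring
  have hl1xs' : l1norm xs ≤ L + 1 := by linarith
  have hCsq : C^2 ≤ C := by
    have h := mul_le_mul_of_nonneg_right hC1 hCpos.le
    calc C^2 = C*C := sq C
    _ ≤ 1*C := h
    _ = C := one_mul C
  have hC3C : C^3 ≤ C := by
    have h := mul_le_mul_of_nonneg_right (pow_le_one₀ hCpos.le hC1 : C^2 ≤ 1) hCpos.le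
    calc C^3 = C^2*C := by ring
    _ ≤ 1*C := h
    _ = C := one_mul C
  have hsqrtC : Real.sqrt C ≥ C := by
    rw [ge_iff_le]
    exact (Real.le_sqrt hCpos.le hCpos.le).2 hCsq
  have hsqrtCnn : 0 ≤ Real.sqrt C := Real.sqrt_nonneg C
  have hn1 : nrm2 (Φ.mulVec xs - y) ≤ Real.sqrt C * Real.sqrt (1 + 2*L) := by
    rw [← Real.sqrt_mul hCpos.le]
    apply nrm2_le_sqrt
    have h1 : C^2*lam^2 ≤ C^4 := by
      have hl2 : lam^2 ≤ C^2 := pow_le_pow_left₀ hlam.le hlamC 2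
      have := mul_le_mul_of_nonneg_left hl2 (sq_nonneg C)
      calc C^2*lam^2 ≤ C^2*C^2 := this
      _ = C^4 := by ring
    have h2 : C^4 ≤ C := by
      have h := mul_le_mul_of_nonneg_right hC3 hCpos.le
      calc C^4 = C^3*C := by ring
      _ ≤ 1*C := h
      _ = C := one_mul C
    have h3 : 2*lam*L ≤ 2*C*L := by
      have := mul_le_mul_of_nonneg_right hlamC (mul_nonneg (by norm_num : (0:ℝ) ≤ 2) hLnn)
      linarith
    calc nrm2 (Φ.mulVec xs - y) ^ 2 = Aq := rfl
    _ ≤ C^2*lam^2 + 2*lam*L := hAqle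
    _ ≤ C + 2*C*L := by linarith
    _ = C * (1 + 2*L) := by ring
  have hwsC : nrm2 w ≤ Real.sqrt C := by
    have h1 : C*lam ≤ C^2 := by
      have := mul_le_mul_of_nonneg_left hlamC hCpos.le
      calc C*lam ≤ C*C := this
      _ = C^2 := (sq C).symm
    linarith
  have hgxs : nrm2 (Φ.mulVec xs - Φ.mulVec x₀) + max (l1norm xs - L) 0 < μ := by
    have hdecomp : Φ.mulVec xs - Φ.mulVec x₀ = (Φ.mulVec xs - y) + w := by
      rw [hy]; ring
    have htri : nrm2 (Φ.mulVec xs - Φ.mulVec x₀) ≤ nrm2 (Φ.mulVec xs - y) + nrm2 w := by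
      rw [hdecomp]; exact nrm2_add_le _ _
    have hmax : max (l1norm xs - L) 0 ≤ Real.sqrt C := by
      apply max_le _ hsqrtCnn
      have : C^2*lam/2 ≤ C := by linarith
      linarith
    have htot : nrm2 (Φ.mulVec xs - Φ.mulVec x₀) + max (l1norm xs - L) 0 ≤
        Real.sqrt C * D := by
      have : Real.sqrt C * D = Real.sqrt C * Real.sqrt (1+2*L) + Real.sqrt C + Real.sqrt C := by
        rw [hD]; ring
      rw [this]
      linarith
    have hlt : Real.sqrt C * D < μ := by
      have hCD : C * D^2 ≤ μ^2/2 := by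
        have h1 := mul_le_mul_of_nonneg_right hCmu (sq_nonneg D)
        have h2 : μ^2/(2*D^2)*D^2 = μ^2/2 := by
          field_simp
        rw [h2] at h1; exact h1
      by_contra hcon
      push_neg at hcon
      have h3 : μ^2 ≤ (Real.sqrt C * D)^2 :=
        pow_le_pow_left₀ hμpos.le hcon 2
      rw [mul_pow, Real.sq_sqrt hCpos.le] at h3
      have hμ2 : 0 < μ^2 := pow_pos hμpos 2
      linarith
    linarith
  have hdist : dist xs x₀ < ε := hμ xs hl1xs' hgxs
  -- Step 3: signs agree on I, support equals I
  have hcoord : ∀ i : Fin N, |xs i - x₀ i| < ε := by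
    intro i
    have h := dist_le_pi_dist xs x₀ i
    rw [Real.dist_eq] at h
    linarith
  have hsign : ∀ i ∈ I, xs i ≠ 0 ∧ sgn (xs i) = sgn (x₀ i) := by
    intro i hi
    have hne : x₀ i ≠ 0 := by simpa [hI, suppF] using hi
    apply sgn_stable hne
    have h1 := hε0le i hi
    have h2 := abs_pos.2 hne
    have h3 := hcoord i
    rw [hε] at h3
    linarith
  -- Step 4: optimality conditions
  have hopt := fun k => opt_cond Φ y hlam xs hmin k
  have hIopt : ∀ i : ↥I, dotp r (fun p => Φ p (i:Fin N)) = lam * sgn (x₀ (i:Fin N)) := by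
    intro i
    obtain ⟨hne, hseq⟩ := hsign i i.2
    have h := (hopt i).2 hne
    rw [hseq] at h
    exact h
  have hJopt : ∀ j : Fin N, j ∉ I → |dotp r (fun p => Φ p j)| ≤ lam := by
    intro j hj
    have hxj : xs j = 0 := by
      by_contra hc
      exact hj (by simpa [hI, suppF, Finset.mem_filter] using hsupp j hc)
    exact (hopt j).1 hxj
  -- Step 5: linear algebra
  set h'vec : ↥I → ℝ := fun i => x₀ (i:Fin N) - xs (i:Fin N) with hh'vec
  have hrw : r = w + A.mulVec h'vec := by
    have hv0 : ∀ j, j ∉ I → (x₀ - xs) j = 0 := by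
      intro j hj
      have hx0j : x₀ j = 0 := by
        by_contra hc
        exact hj (by simpa [hI, suppF, Finset.mem_filter] using hc)
      have hxsj : xs j = 0 := by
        by_contra hc
        exact hj (by simpa [hI, suppF, Finset.mem_filter] using hsupp j hc)
      simp [hx0j, hxsj]
    have h1 : Φ.mulVec (x₀ - xs) = (colsub Φ I).mulVec (fun i : ↥I => (x₀ - xs) (i:Fin N)) :=
      mulVec_support_subset Φ I _ hv0
    have h2 : r = w + Φ.mulVec (x₀ - xs) := by
      rw [hr, hy, Matrix.mulVec_sub]; ring
    rw [h2, h1, ← hA]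
    congr 1
  have hAr : Aᵀ.mulVec r = lam • s := by
    funext i
    have h := hIopt i
    simp only [Matrix.mulVec, dotProduct, Matrix.transpose_apply, Pi.smul_apply,
      smul_eq_mul, hA, colsub, Matrix.submatrix_apply, id]
    rw [← h]
    unfold dotp
    exact Finset.sum_congr rfl fun p _ => mul_comm _ _
  have hGh : G.mulVec h'vec = lam • s - Aᵀ.mulVec w := by
    have h := hAr
    rw [hrw, Matrix.mulVec_add, Matrix.mulVec_mulVec, ← hG] at h
    exact eq_sub_of_add_eq' h
  have hh'eq : h'vec = G⁻¹.mulVec (lam • s - Aᵀ.mulVec w) := by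
    calc h'vec = (G⁻¹*G).mulVec h'vec := by rw [hGinv, Matrix.one_mulVec]
    _ = G⁻¹.mulVec (G.mulVec h'vec) := (Matrix.mulVec_mulVec _ _ _).symm
    _ = _ := by rw [hGh]
  -- Step 6: contradiction with the irrepresentable condition
  have hnej : Nonempty {j // j ∉ I} := by
    by_contra hcon
    rw [not_nonempty_iff] at hcon
    have hz : IC = 0 := by
      rw [hICdef]; unfold ICval
      exact Real.iSup_of_isEmpty _
    rw [hz] at hIC; linarith
  obtain ⟨j0, hj0⟩ := linf_le_max
    ((Φ.submatrix id ((↑) : {j // j ∉ I} → Fin N))ᵀ.mulVec (pFvec Φ I s))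
  have hj0IC : IC ≤
      |(Φ.submatrix id ((↑) : {j // j ∉ I} → Fin N))ᵀ.mulVec (pFvec Φ I s) j0| := by
    rw [hICdef]; exact hj0
  set j : Fin N := (j0 : Fin N) with hj
  have hjI : j ∉ I := j0.2
  set colj : Fin P → ℝ := fun p => Φ p j with hcolj
  have huj : (Φ.submatrix id ((↑) : {j // j ∉ I} → Fin N))ᵀ.mulVec (pFvec Φ I s) j0
      = dotp colj (pFvec Φ I s) := by
    simp only [Matrix.mulVec, dotProduct, Matrix.transpose_apply,
      Matrix.submatrix_apply, id, dotp, hcolj]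
    rfl
  have hpf : pFvec Φ I s = A.mulVec (G⁻¹.mulVec s) := rfl
  have hT : dotp (A.mulVec h'vec) colj
      = lam * dotp colj (pFvec Φ I s) - dotp (b j) w := by
    rw [dotp_comm, dotp_eq]
    rw [Matrix.dotProduct_mulVec, ← Matrix.mulVec_transpose]
    rw [hh'eq, Matrix.mulVec_sub, dotProduct_sub]
    congr 1
    · rw [Matrix.mulVec_smul, dotProduct_smul, smul_eq_mul]
      congr 1
      rw [hpf, dotp_eq, Matrix.dotProduct_mulVec colj A (G⁻¹.mulVec s),
        ← Matrix.mulVec_transpose]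
    · rw [Matrix.dotProduct_mulVec, ← Matrix.mulVec_transpose]
      rw [Matrix.dotProduct_mulVec, ← Matrix.mulVec_transpose, Matrix.transpose_transpose]
      rfl
  have hkey : dotp r colj = dotp w colj + (lam * dotp colj (pFvec Φ I s) - dotp (b j) w) := by
    rw [hrw, dotp_add_left, hT]
  have habs : |dotp r colj| ≤ lam := hJopt j hjI
  have hwb1 : |dotp w colj| ≤ C*lam * nrm2 colj := by
    have h := abs_dotp_le w colj
    have h2 := mul_le_mul_of_nonneg_right hw (nrm2_nonneg colj)
    linarith
  have hwb2 : |dotp (b j) w| ≤ nrm2 (b j) * (C*lam) := by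
    have h := abs_dotp_le (b j) w
    have h2 := mul_le_mul_of_nonneg_left hw (nrm2_nonneg (b j))
    linarith
  have hICj : lam * IC ≤ lam * |dotp colj (pFvec Φ I s)| := by
    apply mul_le_mul_of_nonneg_left _ hlam.le
    rw [← huj]; exact hj0IC
  have habs2 : lam * |dotp colj (pFvec Φ I s)| = |lam * dotp colj (pFvec Φ I s)| := by
    rw [abs_mul, abs_of_pos hlam]
  have htriag : |lam * dotp colj (pFvec Φ I s)| ≤
      |dotp r colj| + |dotp w colj| + |dotp (b j) w| := by
    have he : lam * dotp colj (pFvec Φ I s) = dotp r colj - dotp w colj + dotp (b j) w := by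
      rw [hkey]; ring
    rw [he]
    have h1 := abs_add_le (dotp r colj - dotp w colj) (dotp (b j) w)
    have h2 := abs_add_le (dotp r colj) (-(dotp w colj))
    rw [abs_neg] at h2
    rw [sub_eq_add_neg] at h1 ⊢
    linarith
  have hKcj := hKcge j
  have hcomb : lam * IC ≤ lam + Kc*(C*lam) := by
    have h1 : lam * IC ≤ lam + (nrm2 colj + nrm2 (b j))*(C*lam) := by
      have h3 : (nrm2 colj + nrm2 (b j))*(C*lam) =
          C*lam*nrm2 colj + nrm2 (b j)*(C*lam) := by ring
      rw [h3]
      linarith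
    have h2 : (nrm2 colj + nrm2 (b j))*(C*lam) ≤ Kc*(C*lam) :=
      mul_le_mul_of_nonneg_right hKcj (by positivity)
    linarith
  have hKcC : Kc*C ≤ (IC-1)/2 := by
    have h1 := mul_le_mul_of_nonneg_left hCK hKcpos.le
    have h2 : Kc*((IC-1)/(2*Kc)) = (IC-1)/2 := by
      field_simp
    rw [h2] at h1; exact h1
  have hx : lam * IC ≤ lam * (1 + (IC-1)/2) := by
    have h1 : Kc*(C*lam) = (Kc*C)*lam := by ring
    have h2 : (Kc*C)*lam ≤ ((IC-1)/2)*lam := mul_le_mul_of_nonneg_right hKcC hlam.le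
    have h3 : lam * (1 + (IC-1)/2) = lam + ((IC-1)/2)*lam := by ring
    rw [h3]
    linarith
  have hfin : IC ≤ 1 + (IC-1)/2 := (mul_le_mul_iff_right₀ hlam).1 hx
  linarith
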